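/- Let H be a Hopf algebra over a commutative ring k, let A and B be unital associative k-algebras with left H-module algebra actions, and let E be an H-equivariant (B,A)-bimodule with H-action ▷. Then for every 𝖻 ∈ Gl(H,B), the formula h ▷^𝖻 x := 𝖻(h₁) · (h₂ ▷ x) again defines a left H-module structure on E ((gh) ▷^𝖻 x = g ▷^𝖻 (h ▷^𝖻 x) and 1_H ▷^𝖻 x = x) which is compatible with the bimodule structure: h ▷^𝖻 (b·x) = (h₁ ▷ b)·(h₂ ▷^𝖻 x) and h ▷^𝖻 (x·a) = (h₁ ▷^𝖻 x)·(h₂ ▷ a). -/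

import Mathlib

open scoped TensorProduct

noncomputable section

namespace EquivariantMorita

/-- The Sweedler-type map `h ↦ μ (f h₍₁₎) (g h₍₂₎)` (with implicit summation over the
Sweedler decomposition `Δ h = h₍₁₎ ⊗ h₍₂₎` of the comultiplication). -/
def sw (k : Type*) {H M N P : Type*} [CommRing k]
    [AddCommGroup H] [Module k H] [Coalgebra k H]
    [AddCommGroup M] [Module k M] [AddCommGroup N] [Module k N]
    [AddCommGroup P] [Module k P]
    (μ : M →ₗ[k] N →ₗ[k] P) (f : H →ₗ[k] M) (g : H →ₗ[k] N) : H →ₗ[k] P :=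
  TensorProduct.lift μ ∘ₗ TensorProduct.map f g ∘ₗ (Coalgebra.comul : H →ₗ[k] H ⊗[k] H)

/-- The convolution-type map `h ↦ f (h₍₁₎) * g (h₍₂₎)`. -/
def swMul (k : Type*) {H A : Type*} [CommRing k]
    [AddCommGroup H] [Module k H] [Coalgebra k H] [Ring A] [Algebra k A]
    (f g : H →ₗ[k] A) : H →ₗ[k] A :=
  sw k (LinearMap.mul k A) f g

section ModuleAlgebra

variable (k : Type*) [CommRing k] {H : Type*} [Ring H] [HopfAlgebra k H]
variable {A : Type*} [Ring A] [Algebra k A]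

/-- `act : H × A → A` (given as a `k`-bilinear map) makes `A` a left `H`-module algebra:
`(gh) ▷ a = g ▷ (h ▷ a)`, `1 ▷ a = a`, `h ▷ (ab) = (h₍₁₎ ▷ a)(h₍₂₎ ▷ b)` and
`h ▷ 1 = ε(h) 1`. -/
structure IsModuleAlgebraAction (act : H →ₗ[k] A →ₗ[k] A) : Prop where
  mul_act : ∀ (g h : H) (a : A), act (g * h) a = act g (act h a)
  one_act : ∀ a : A, act 1 a = a
  act_mul : ∀ (h : H) (a b : A), act h (a * b) = swMul k (act.flip a) (act.flip b) h
  act_one : ∀ h : H, act h 1 = Coalgebra.counit (R := k) h • (1 : A)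

/-- Membership in `Gl(H,A)`: (i) `𝖺(1) = 1`, (ii) `𝖺(gh) = 𝖺(g₍₁₎)(g₍₂₎ ▷ 𝖺(h))`,
(iii) `(h₍₁₎ ▷ b) 𝖺(h₍₂₎) = 𝖺(h₍₁₎)(h₍₂₎ ▷ b)`. -/
structure MemGl (act : H →ₗ[k] A →ₗ[k] A) (a : H →ₗ[k] A) : Prop where
  map_one' : a 1 = 1
  map_mul' : ∀ g h : H, a (g * h) = swMul k a (act.flip (a h)) g
  comm' : ∀ (h : H) (b : A), swMul k (act.flip b) a h = swMul k a (act.flip b) h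

/-- `J` is a momentum map for the action `act`: it is a unital algebra homomorphism
`H → A` with `h ▷ a = J(h₍₁₎) a J(S(h₍₂₎))`. -/
structure IsMomentumMap (act : H →ₗ[k] A →ₗ[k] A) (J : H →ₗ[k] A) : Prop where
  map_one' : J 1 = 1
  map_mul' : ∀ g h : H, J (g * h) = J g * J h
  inner' : ∀ (h : H) (a : A),
    act h a = swMul k J (LinearMap.mul k A a ∘ₗ (J ∘ₗ HopfAlgebra.antipode (R := k))) h

end ModuleAlgebra

end EquivariantMorita

namespace EquivariantMorita

section BimodulePart

variable (k : Type*) [CommRing k]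
variable {H : Type*} [Ring H] [HopfAlgebra k H]
variable {A : Type*} [Ring A] [Algebra k A]
variable {B : Type*} [Ring B] [Algebra k B]
variable {E : Type*} [AddCommGroup E] [Module k E]

/-- `E` is a unital `(B,A)`-bimodule via the `k`-bilinear left multiplication `lB`
(`lB b x = b · x`) and right multiplication `rA` (`rA a x = x · a`). -/
structure IsBimodule (lB : B →ₗ[k] E →ₗ[k] E) (rA : A →ₗ[k] E →ₗ[k] E) : Prop where
  one_lsmul : ∀ x : E, lB 1 x = x
  mul_lsmul : ∀ (b b' : B) (x : E), lB (b * b') x = lB b (lB b' x)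
  one_rsmul : ∀ x : E, rA 1 x = x
  mul_rsmul : ∀ (a a' : A) (x : E), rA (a * a') x = rA a' (rA a x)
  lsmul_rsmul : ∀ (b : B) (a : A) (x : E), rA a (lB b x) = lB b (rA a x)

/-- `actE` makes the `(B,A)`-bimodule `E` (with multiplications `lB`, `rA`) an
`H`-equivariant bimodule: `(gh) ▷ x = g ▷ (h ▷ x)`, `1 ▷ x = x`,
`h ▷ (b·x) = (h₍₁₎ ▷ b)·(h₍₂₎ ▷ x)` and `h ▷ (x·a) = (h₍₁₎ ▷ x)·(h₍₂₎ ▷ a)`. -/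
structure IsEquivariantBimodule (actB : H →ₗ[k] B →ₗ[k] B) (actA : H →ₗ[k] A →ₗ[k] A)
    (lB : B →ₗ[k] E →ₗ[k] E) (rA : A →ₗ[k] E →ₗ[k] E)
    (actE : H →ₗ[k] E →ₗ[k] E) : Prop where
  mul_act : ∀ (g h : H) (x : E), actE (g * h) x = actE g (actE h x)
  one_act : ∀ x : E, actE 1 x = x
  act_lsmul : ∀ (h : H) (b : B) (x : E),
    actE h (lB b x) = sw k lB (actB.flip b) (actE.flip x) h
  act_rsmul : ∀ (h : H) (a : A) (x : E),
    actE h (rA a x) = sw k rA.flip (actE.flip x) (actA.flip a) h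

/-- The canonical lift `h ▷ x = J^B(h₍₁₎) · (x · J^A(S(h₍₂₎)))` of the `H`-action to a
`(B,A)`-bimodule along momentum maps, as a linear map in `h` for fixed `x`. -/
def momLift (JB : H →ₗ[k] B) (JA : H →ₗ[k] A)
    (lB : B →ₗ[k] E →ₗ[k] E) (rA : A →ₗ[k] E →ₗ[k] E) (x : E) : H →ₗ[k] E :=
  sw k lB JB (rA.flip x ∘ₗ (JA ∘ₗ HopfAlgebra.antipode (R := k)))

end BimodulePart

end EquivariantMorita

namespace EquivariantMorita

section SwLemmas

variable {k : Type*} [CommRing k] {H : Type*} [AddCommGroup H] [Module k H] [Coalgebra k H]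
variable {M N P M' N' Q : Type*}
  [AddCommGroup M] [Module k M] [AddCommGroup N] [Module k N] [AddCommGroup P] [Module k P]
  [AddCommGroup M'] [Module k M'] [AddCommGroup N'] [Module k N'] [AddCommGroup Q] [Module k Q]

lemma sw_apply (μ : M →ₗ[k] N →ₗ[k] P) (f : H →ₗ[k] M) (g : H →ₗ[k] N) (h : H) :
    sw k μ f g h = TensorProduct.lift μ (TensorProduct.map f g (Coalgebra.comul h)) := rfl

lemma sw_add_right (μ : M →ₗ[k] N →ₗ[k] P) (f : H →ₗ[k] M) (g g' : H →ₗ[k] N) :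
    sw k μ f (g + g') = sw k μ f g + sw k μ f g' := by
  ext h
  simp [sw, TensorProduct.map_add_right]

lemma sw_smul_right (μ : M →ₗ[k] N →ₗ[k] P) (f : H →ₗ[k] M) (c : k) (g : H →ₗ[k] N) :
    sw k μ f (c • g) = c • sw k μ f g := by
  ext h
  simp [sw, TensorProduct.map_smul_right]

lemma sw_zero_right (μ : M →ₗ[k] N →ₗ[k] P) (f : H →ₗ[k] M) :
    sw k μ f (0 : H →ₗ[k] N) = 0 := by
  ext h
  simp [sw, TensorProduct.map_zero_right]

/-- Coassociativity in Sweedler form: if `U (ν m n) p = μ m (ν' n p)` then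
`U (ν (f h₍₁₎) (g h₍₂₎)) (h' h₍₃₎) = μ (f h₍₁₎) (ν' (g h₍₂₎) (h' h₍₃₎))`. -/
lemma sw_assoc (U : M' →ₗ[k] P →ₗ[k] Q) (ν : M →ₗ[k] N →ₗ[k] M')
    (μ : M →ₗ[k] N' →ₗ[k] Q) (ν' : N →ₗ[k] P →ₗ[k] N')
    (hc : ∀ m n p, U (ν m n) p = μ m (ν' n p))
    (f : H →ₗ[k] M) (g : H →ₗ[k] N) (h' : H →ₗ[k] P) :
    sw k U (sw k ν f g) h' = sw k μ f (sw k ν' g h') := by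
  have key : TensorProduct.lift U ∘ₗ
        TensorProduct.map (TensorProduct.lift ν ∘ₗ TensorProduct.map f g) h' ∘ₗ
        (TensorProduct.assoc k H H H).symm.toLinearMap
      = TensorProduct.lift μ ∘ₗ
        TensorProduct.map f (TensorProduct.lift ν' ∘ₗ TensorProduct.map g h') := by
    ext m n p
    simp [hc]
  have h1 : TensorProduct.map
        (TensorProduct.lift ν ∘ₗ TensorProduct.map f g ∘ₗ
          (Coalgebra.comul : H →ₗ[k] H ⊗[k] H)) h'
      = (TensorProduct.map (TensorProduct.lift ν ∘ₗ TensorProduct.map f g) h') ∘ₗ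
        (Coalgebra.comul : H →ₗ[k] H ⊗[k] H).rTensor H := by
    ext m p
    simp
  have h2 : TensorProduct.map f
        (TensorProduct.lift ν' ∘ₗ TensorProduct.map g h' ∘ₗ
          (Coalgebra.comul : H →ₗ[k] H ⊗[k] H))
      = (TensorProduct.map f (TensorProduct.lift ν' ∘ₗ TensorProduct.map g h')) ∘ₗ
        (Coalgebra.comul : H →ₗ[k] H ⊗[k] H).lTensor H := by
    ext m p
    simp
  ext h
  simp only [sw, LinearMap.comp_apply]
  rw [show TensorProduct.map (TensorProduct.lift ν ∘ₗ TensorProduct.map f g ∘ₗ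
        (Coalgebra.comul : H →ₗ[k] H ⊗[k] H)) h' = _ from h1,
      show TensorProduct.map f (TensorProduct.lift ν' ∘ₗ TensorProduct.map g h' ∘ₗ
        (Coalgebra.comul : H →ₗ[k] H ⊗[k] H)) = _ from h2]
  simp only [LinearMap.comp_apply]
  rw [← Coalgebra.coassoc_symm_apply]
  exact LinearMap.congr_fun key _

end SwLemmas

/-- If `E` is an `H`-equivariant `(B,A)`-bimodule with action `▷` and
`𝖻 ∈ Gl(H,B)`, then `h ▷^𝖻 x := 𝖻(h₍₁₎) · (h₍₂₎ ▷ x)` again defines a left `H`-module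
structure on `E` compatible with the bimodule structure. -/
theorem twisted_action_isEquivariantBimodule
    (k : Type*) [CommRing k]
    {H : Type*} [Ring H] [HopfAlgebra k H]
    {A : Type*} [Ring A] [Algebra k A]
    {B : Type*} [Ring B] [Algebra k B]
    {E : Type*} [AddCommGroup E] [Module k E]
    (actA : H →ₗ[k] A →ₗ[k] A) (hactA : IsModuleAlgebraAction k actA)
    (actB : H →ₗ[k] B →ₗ[k] B) (hactB : IsModuleAlgebraAction k actB)
    (lB : B →ₗ[k] E →ₗ[k] E) (rA : A →ₗ[k] E →ₗ[k] E) (hbim : IsBimodule k lB rA)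
    (actE : H →ₗ[k] E →ₗ[k] E)
    (heq : IsEquivariantBimodule k actB actA lB rA actE)
    (b : H →ₗ[k] B) (hb : MemGl k actB b) :
    ∃ actE' : H →ₗ[k] E →ₗ[k] E,
      (∀ (h : H) (x : E), actE' h x = sw k lB b (actE.flip x) h)
        ∧ IsEquivariantBimodule k actB actA lB rA actE' := by
  -- the twisted action as a bilinear map
  let actE' : H →ₗ[k] E →ₗ[k] E :=
    { toFun := fun h =>
        { toFun := fun x => sw k lB b (actE.flip x) h
          map_add' := fun x y => by
            show sw k lB b (actE.flip (x + y)) h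
                = sw k lB b (actE.flip x) h + sw k lB b (actE.flip y) h
            rw [map_add (actE.flip), sw_add_right]; rfl
          map_smul' := fun c x => by
            show sw k lB b (actE.flip (c • x)) h = (RingHom.id k) c • sw k lB b (actE.flip x) h
            rw [map_smul (actE.flip), sw_smul_right]; rfl }
      map_add' := fun h h' => LinearMap.ext fun x => by
        simp only [LinearMap.coe_mk, AddHom.coe_mk, map_add, LinearMap.add_apply]
      map_smul' := fun c h => LinearMap.ext fun x => by
        simp only [LinearMap.coe_mk, AddHom.coe_mk, map_smul, RingHom.id_apply,
          LinearMap.smul_apply] }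
  have hdef : ∀ (h : H) (x : E), actE' h x = sw k lB b (actE.flip x) h := fun _ _ => rfl
  -- compatibility of `lB` with the multiplication of `B`
  have hcB : ∀ (m n : B) (p : E), lB (LinearMap.mul k B m n) p = lB m (lB n p) := by
    intro m n p
    simpa using hbim.mul_lsmul m n p
  refine ⟨actE', hdef, ?_, ?_, ?_, ?_⟩
  · -- mul_act
    intro g h x
    have main : ∀ z : H ⊗[k] H,
        TensorProduct.lift lB (TensorProduct.map b (actE.flip x) (Coalgebra.comul g * z))
          = actE' g (TensorProduct.lift lB (TensorProduct.map b (actE.flip x) z)) := by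
      intro z
      induction z using TensorProduct.induction_on with
      | zero =>
        simp only [mul_zero, map_zero]
      | add z w hz hw =>
        simp only [mul_add, map_add, hz, hw]
      | tmul c d =>
        -- rewrite `comul g * (c ⊗ₜ d)` as a linear map applied to `comul g`
        have hmr : ∀ z : H ⊗[k] H, z * (c ⊗ₜ[k] d)
            = TensorProduct.map (LinearMap.mulRight k c) (LinearMap.mulRight k d) z := by
          intro z
          induction z using TensorProduct.induction_on with
          | zero => simp
          | add z w hz hw => simp [add_mul, hz, hw]
          | tmul p q => simp [Algebra.TensorProduct.tmul_mul_tmul]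
        rw [hmr]
        have e5 := LinearMap.congr_fun
          (TensorProduct.map_comp b (actE.flip x)
            (LinearMap.mulRight k c) (LinearMap.mulRight k d)) (Coalgebra.comul (R := k) g)
        rw [LinearMap.comp_apply] at e5
        rw [← e5]
        have e3 : b ∘ₗ LinearMap.mulRight k c
            = sw k (LinearMap.mul k B) b (actB.flip (b c)) := by
          ext p
          simpa [swMul] using hb.map_mul' p c
        have e4 : actE.flip x ∘ₗ LinearMap.mulRight k d = actE.flip (actE d x) := by
          ext q
          simpa using heq.mul_act q d x
        rw [e3, e4]
        have := sw_assoc (k := k) lB (LinearMap.mul k B) lB lB hcB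
          b (actB.flip (b c)) (actE.flip (actE d x))
        rw [show TensorProduct.lift lB
              (TensorProduct.map (sw k (LinearMap.mul k B) b (actB.flip (b c)))
                (actE.flip (actE d x)) (Coalgebra.comul g))
            = sw k lB (sw k (LinearMap.mul k B) b (actB.flip (b c)))
                (actE.flip (actE d x)) g from rfl, this]
        have e6 : sw k lB (actB.flip (b c)) (actE.flip (actE d x))
            = actE.flip (lB (b c) (actE d x)) := by
          ext q
          exact (heq.act_lsmul q (b c) (actE d x)).symm
        rw [e6]
        simp only [TensorProduct.map_tmul, TensorProduct.lift.tmul]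
        rfl
    show sw k lB b (actE.flip x) (g * h) = actE' g (actE' h x)
    rw [sw_apply, Bialgebra.comul_mul]
    exact main (Coalgebra.comul h)
  · -- one_act
    intro x
    show sw k lB b (actE.flip x) 1 = x
    rw [sw_apply]
    rw [show (Coalgebra.comul (R := k) (1 : H)) = (1 : H) ⊗ₜ[k] (1 : H) by
      simp [Algebra.TensorProduct.one_def]]
    simp only [TensorProduct.map_tmul, TensorProduct.lift.tmul]
    rw [hb.map_one']
    show lB 1 (actE 1 x) = x
    rw [heq.one_act, hbim.one_lsmul]
  · -- act_lsmul
    intro h b' x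
    show sw k lB b (actE.flip (lB b' x)) h
        = sw k lB (actB.flip b') (actE'.flip x) h
    have e1 : actE.flip (lB b' x) = sw k lB (actB.flip b') (actE.flip x) :=
      LinearMap.ext fun q => heq.act_lsmul q b' x
    rw [e1, ← sw_assoc (k := k) lB (LinearMap.mul k B) lB lB hcB b (actB.flip b') (actE.flip x)]
    have e2 : sw k (LinearMap.mul k B) b (actB.flip b')
        = sw k (LinearMap.mul k B) (actB.flip b') b :=
      LinearMap.ext fun q => (hb.comm' q b').symm
    rw [e2, sw_assoc (k := k) lB (LinearMap.mul k B) lB lB hcB (actB.flip b') b (actE.flip x)]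
    rw [show sw k lB b (actE.flip x) = actE'.flip x from LinearMap.ext fun q => rfl]
  · -- act_rsmul
    intro h a x
    show sw k lB b (actE.flip (rA a x)) h
        = sw k rA.flip (actE'.flip x) (actA.flip a) h
    have e1 : actE.flip (rA a x) = sw k rA.flip (actE.flip x) (actA.flip a) :=
      LinearMap.ext fun q => heq.act_rsmul q a x
    have hc : ∀ (m : B) (n : E) (p : A), rA.flip (lB m n) p = lB m (rA.flip n p) := by
      intro m n p
      simpa using hbim.lsmul_rsmul m p n
    rw [e1, ← sw_assoc (k := k) rA.flip lB lB rA.flip hc b (actE.flip x) (actA.flip a)]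
    rw [show sw k lB b (actE.flip x) = actE'.flip x from LinearMap.ext fun q => rfl]

end EquivariantMorita
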